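/- Let R be a reduced ring. If A and B are 3×3 matrices over R that are upper triangular with all diagonal entries equal (i.e., A, B lie in D₃(R)) and AB = 0, then BAE = 0, where E is the 3×3 matrix unit E₂₂ whose (2,2)-entry is 1 and all other entries are 0. -/

import Mathlib

/-- Over a reduced ring, if `A, B ∈ D₃(R)` (upper triangular with constant diagonal)
and `A * B = 0`, then `B * A * E₂₂ = 0`. -/
theorem D3_right_E22_reversible {R : Type*} [Ring R] [IsReduced R]
    (A B : Matrix (Fin 3) (Fin 3) R)
    (hAtri : ∀ i j : Fin 3, j < i → A i j = 0)
    (hAd1 : A 0 0 = A 1 1) (hAd2 : A 1 1 = A 2 2)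
    (hBtri : ∀ i j : Fin 3, j < i → B i j = 0)
    (hBd1 : B 0 0 = B 1 1) (hBd2 : B 1 1 = B 2 2)
    (hAB : A * B = 0) :
    B * A * Matrix.single (1 : Fin 3) (1 : Fin 3) (1 : R) = 0 := by
  have hA10 : A 1 0 = 0 := hAtri 1 0 (by decide)
  have hA20 : A 2 0 = 0 := hAtri 2 0 (by decide)
  have hA21 : A 2 1 = 0 := hAtri 2 1 (by decide)
  have hB10 : B 1 0 = 0 := hBtri 1 0 (by decide)
  have hB20 : B 2 0 = 0 := hBtri 2 0 (by decide)
  have hB21 : B 2 1 = 0 := hBtri 2 1 (by decide)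
  have h00 := congrFun (congrFun hAB 0) 0
  have h01 := congrFun (congrFun hAB 0) 1
  simp [Matrix.mul_apply, Fin.sum_univ_three, hA10, hA20, hA21, hB10, hB20, hB21,
    hAd1, hBd1] at h00 h01
  set a := A 1 1 with ha
  set b := B 1 1 with hb
  set x := A 0 1 with hx
  set y := B 0 1 with hy
  -- h00 : a * b = 0, h01 : a * y + x * b = 0
  have hba : b * a = 0 := by
    have h2 : (b * a) ^ 2 = 0 := by
      have e : (b * a) ^ 2 = b * (a * b) * a := by noncomm_ring
      rw [e, h00, mul_zero, zero_mul]
    exact IsReduced.eq_zero _ ⟨2, h2⟩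
  have hbxb : b * x * b = 0 := by
    have h := congrArg (fun z => b * z) h01
    simp only [mul_add, mul_zero] at h
    have e : b * (a * y) = b * a * y := by noncomm_ring
    rw [e, hba, zero_mul, zero_add] at h
    calc b * x * b = b * (x * b) := by noncomm_ring
      _ = 0 := h
  have haya : a * y * a = 0 := by
    have h := congrArg (fun z => z * a) h01
    simp only [add_mul, zero_mul] at h
    have e : x * b * a = x * (b * a) := by noncomm_ring
    rw [e, hba, mul_zero, add_zero] at h
    exact h
  have ht : b * x + y * a = 0 := by
    have e2 : (b * x + y * a) * (b * x + y * a) = b * x * (y * a) := by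
      have e : (b * x + y * a) * (b * x + y * a) =
          (b * x * b) * x + b * x * (y * a) + y * (a * b) * x + y * (a * y * a) := by
        noncomm_ring
      rw [e, hbxb, h00, haya]
      simp
    have h4 : (b * x + y * a) ^ 4 = 0 := by
      have e : (b * x + y * a) ^ 4 =
          ((b * x + y * a) * (b * x + y * a)) * ((b * x + y * a) * (b * x + y * a)) := by
        noncomm_ring
      rw [e, e2]
      calc b * x * (y * a) * (b * x * (y * a))
          = b * x * (y * (a * b)) * (x * (y * a)) := by noncomm_ring
        _ = 0 := by rw [h00, mul_zero, mul_zero, zero_mul]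
    exact IsReduced.eq_zero _ ⟨4, h4⟩
  ext i j
  fin_cases i <;> fin_cases j <;>
    simp [Matrix.mul_apply, Fin.sum_univ_three, Matrix.single,
      hA10, hA20, hA21, hB10, hB20, hB21, ← ha, ← hb, ← hx, ← hy,
      hAd1, hBd1, hba, ht]
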